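/- Let (X, ρ) be a metric space, λ ∈ Δ∞, and x = (x_k)_{k∈ℕ} a sequence in X. If x is λ-statistically bounded, i.e., there exists a compact subset C of X such that the set {k ∈ ℕ : x_k ∉ C} has λ-density zero, then the set Γ_x(λ) of λ-statistical cluster points of x is nonempty and compact. (This is the paper's Theorem 4.7, specialized to the PM space induced by a metric, where F_{xy} = ε_{ρ(x,y)} and the strong topology is the metric topology.) -/

import Mathlib

open Filter Topology

/-- `l` belongs to the class `Δ∞`: a nondecreasing (for indices `≥ 1`) sequence of
positive reals tending to `∞` with `l 1 = 1` and `l (n+1) ≤ l n + 1`. -/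
def DeltaInfty (l : ℕ → ℝ) : Prop :=
  (∀ n, 1 ≤ n → 0 < l n) ∧ (∀ m n, 1 ≤ m → m ≤ n → l m ≤ l n) ∧
    Tendsto l atTop atTop ∧ l 1 = 1 ∧ ∀ n, 1 ≤ n → l (n + 1) ≤ l n + 1

open Classical in
/-- The number of elements of `M` in the window `I_n = [n - l n + 1, n] ∩ ℕ`. -/
noncomputable def lamCount (l : ℕ → ℝ) (M : Set ℕ) (n : ℕ) : ℕ :=
  ((Finset.Icc 1 n).filter (fun (k : ℕ) => ((n : ℝ) - l n + 1 ≤ (k : ℝ)) ∧ k ∈ M)).card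

/-- `M ⊆ ℕ` has `λ`-density `r`: `|{k ∈ I_n : k ∈ M}| / l n → r`. -/
def lamDensity (l : ℕ → ℝ) (M : Set ℕ) (r : ℝ) : Prop :=
  Tendsto (fun n => (lamCount l M n : ℝ) / l n) atTop (𝓝 r)

/-- `Y` is a `λ`-statistical cluster point of `x`: for every `t > 0` the set
`{k : dist (x k) Y < t}` does not have `λ`-density zero. -/
def LamStatClusterPt {X : Type*} [MetricSpace X] (l : ℕ → ℝ) (x : ℕ → X) (Y : X) : Prop :=
  ∀ t > 0, ¬ lamDensity l {k | dist (x k) Y < t} 0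

lemma lamCount_mono (l : ℕ → ℝ) {M N : Set ℕ} (h : M ⊆ N) (n : ℕ) :
    lamCount l M n ≤ lamCount l N n := by
  classical
  unfold lamCount
  apply Finset.card_le_card
  intro k hk
  simp only [Finset.mem_filter] at hk ⊢
  exact ⟨hk.1, hk.2.1, h hk.2.2⟩

lemma lamDensity_zero_mono {l : ℕ → ℝ} (hl : DeltaInfty l) {M N : Set ℕ} (h : M ⊆ N)
    (hN : lamDensity l N 0) : lamDensity l M 0 := by
  apply squeeze_zero_norm' ?_ hN
  filter_upwards [eventually_ge_atTop 1] with n hn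
  have hlpos := hl.1 n hn
  rw [Real.norm_eq_abs, abs_of_nonneg (by positivity)]
  have hc : (lamCount l M n : ℝ) ≤ (lamCount l N n : ℝ) := by
    exact_mod_cast lamCount_mono l h n
  gcongr

lemma lamDensity_zero_union {l : ℕ → ℝ} (hl : DeltaInfty l) {M N : Set ℕ}
    (hM : lamDensity l M 0) (hN : lamDensity l N 0) : lamDensity l (M ∪ N) 0 := by
  have hsum : Tendsto (fun n => (lamCount l M n : ℝ) / l n + (lamCount l N n : ℝ) / l n)
      atTop (𝓝 0) := by simpa using hM.add hN
  apply squeeze_zero_norm' ?_ hsum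
  filter_upwards [eventually_ge_atTop 1] with n hn
  have hlpos := hl.1 n hn
  have hcard : lamCount l (M ∪ N) n ≤ lamCount l M n + lamCount l N n := by
    classical
    unfold lamCount
    refine le_trans (Finset.card_le_card ?_) (Finset.card_union_le _ _)
    intro k hk
    simp only [Finset.mem_filter, Finset.mem_union, Set.mem_union] at hk ⊢
    tauto
  rw [Real.norm_eq_abs, abs_of_nonneg (by positivity), ← add_div]
  have hc : (lamCount l (M ∪ N) n : ℝ) ≤ (lamCount l M n : ℝ) + (lamCount l N n : ℝ) := by
    exact_mod_cast hcard
  gcongr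

lemma lamDensity_zero_empty (l : ℕ → ℝ) : lamDensity l (∅ : Set ℕ) 0 := by
  have : ∀ n, lamCount l (∅ : Set ℕ) n = 0 := by
    intro n
    simp [lamCount]
  unfold lamDensity
  simp only [this, Nat.cast_zero, zero_div]
  exact tendsto_const_nhds

lemma le_of_deltaInfty {l : ℕ → ℝ} (hl : DeltaInfty l) : ∀ n, 1 ≤ n → l n ≤ n := by
  intro n hn
  induction n with
  | zero => omega
  | succ m ih =>
    rcases Nat.eq_or_lt_of_le hn with h | h
    · rw [← h]; rw [show l 1 = 1 from hl.2.2.2.1]; norm_num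
    · have hm : 1 ≤ m := by omega
      have := hl.2.2.2.2 m hm
      have := ih hm
      push_cast
      linarith

lemma not_lamDensity_univ_zero {l : ℕ → ℝ} (hl : DeltaInfty l) :
    ¬ lamDensity l Set.univ 0 := by
  intro h
  have hkey : ∀ n, 1 ≤ n → 1 - 1 / l n ≤ (lamCount l Set.univ n : ℝ) / l n := by
    intro n hn
    have hlpos := hl.1 n hn
    have hl1 : (1 : ℝ) ≤ l n := by
      have := hl.2.1 1 n le_rfl hn
      rw [hl.2.2.2.1] at this; exact this
    have hln : l n ≤ n := le_of_deltaInfty hl n hn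
    set m := ⌊l n⌋₊ with hm
    have hm1 : 1 ≤ m := Nat.le_floor (by exact_mod_cast hl1)
    have hmn : m ≤ n := by
      have : (⌊l n⌋₊ : ℝ) ≤ l n := Nat.floor_le (le_of_lt hlpos)
      exact_mod_cast this.trans hln
    have hcard : (Finset.Icc (n - m + 1) n).card = m := by
      rw [Nat.card_Icc]; omega
    have hcount : m ≤ lamCount l Set.univ n := by
      unfold lamCount
      rw [Finset.filter_congr_decidable]
      refine le_trans (le_of_eq hcard.symm) (Finset.card_le_card ?_)
      intro k hk
      rw [Finset.mem_Icc] at hk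
      rw [Finset.mem_filter, Finset.mem_Icc]
      refine ⟨⟨by omega, hk.2⟩, ?_, Set.mem_univ k⟩
      have hfl : (m : ℝ) ≤ l n := Nat.floor_le (le_of_lt hlpos)
      have hcast : ((n : ℝ) - m + 1) ≤ (k : ℝ) := by
        have : ((n - m + 1 : ℕ) : ℝ) ≤ (k : ℝ) := by exact_mod_cast hk.1
        push_cast [Nat.cast_sub hmn] at this
        linarith
      linarith
    have hlb : l n - 1 ≤ (lamCount l Set.univ n : ℝ) := by
      have hfl : l n < m + 1 := Nat.lt_floor_add_one (l n)
      have : (m : ℝ) ≤ lamCount l Set.univ n := by exact_mod_cast hcount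
      linarith
    calc 1 - 1 / l n = (l n - 1) / l n := by field_simp
      _ ≤ _ := by gcongr
  have h1 : Tendsto (fun n => 1 - 1 / l n) atTop (𝓝 1) := by
    have hinv : Tendsto (fun n => 1 / l n) atTop (𝓝 0) :=
      hl.2.2.1.inv_tendsto_atTop.congr (fun n => (one_div (l n)).symm)
    simpa using tendsto_const_nhds.sub hinv
  have : (1 : ℝ) ≤ 0 :=
    le_of_tendsto_of_tendsto h1 h (by filter_upwards [eventually_ge_atTop 1] with n hn using hkey n hn)
  linarith

theorem lamStatClusterPts_nonempty_and_compact {X : Type*} [MetricSpace X]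
    (l : ℕ → ℝ) (hl : DeltaInfty l) (x : ℕ → X)
    (hbdd : ∃ C : Set X, IsCompact C ∧ lamDensity l {k | x k ∉ C} 0) :
    {Y | LamStatClusterPt l x Y}.Nonempty ∧ IsCompact {Y | LamStatClusterPt l x Y} := by
  obtain ⟨C, hC, hdens⟩ := hbdd
  -- Γ ⊆ C
  have hsub : {Y | LamStatClusterPt l x Y} ⊆ C := by
    intro Y hY
    by_contra hYC
    have hopen : IsOpen Cᶜ := hC.isClosed.isOpen_compl
    obtain ⟨ε, hε, hball⟩ := Metric.isOpen_iff.1 hopen Y hYC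
    apply hY ε hε
    apply lamDensity_zero_mono hl ?_ hdens
    intro k hk
    simp only [Set.mem_setOf_eq] at hk ⊢
    exact hball (by rwa [Metric.mem_ball])
  -- Γ closed
  have hclosed : IsClosed {Y | LamStatClusterPt l x Y} := by
    rw [← isOpen_compl_iff, Metric.isOpen_iff]
    intro Y hY
    simp only [Set.mem_compl_iff, Set.mem_setOf_eq, LamStatClusterPt] at hY
    push_neg at hY
    obtain ⟨t, ht, hd⟩ := hY
    refine ⟨t / 2, by positivity, ?_⟩
    intro Z hZ
    rw [Metric.mem_ball] at hZ
    simp only [Set.mem_compl_iff, Set.mem_setOf_eq, LamStatClusterPt]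
    push_neg
    refine ⟨t / 2, by positivity, ?_⟩
    apply lamDensity_zero_mono hl ?_ hd
    intro k hk
    simp only [Set.mem_setOf_eq] at hk ⊢
    calc dist (x k) Y ≤ dist (x k) Z + dist Z Y := dist_triangle _ _ _
      _ < t / 2 + t / 2 := by linarith
      _ = t := by ring
  refine ⟨?_, hC.of_isClosed_subset hclosed hsub⟩
  -- nonempty
  by_contra hempty
  rw [Set.not_nonempty_iff_eq_empty] at hempty
  have h1 : ∀ Y : X, ∃ t > 0, lamDensity l {k | dist (x k) Y < t} 0 := by
    intro Y
    have hY : ¬ LamStatClusterPt l x Y := by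
      intro h
      have : Y ∈ {Y | LamStatClusterPt l x Y} := h
      rw [hempty] at this
      exact this
    unfold LamStatClusterPt at hY
    push_neg at hY
    exact hY
  choose t ht hdt using h1
  obtain ⟨s, _, hcov⟩ := hC.elim_nhds_subcover (fun Y => Metric.ball Y (t Y))
    (fun Y _ => Metric.ball_mem_nhds Y (ht Y))
  classical
  have hUnion : ∀ s : Finset X, lamDensity l (⋃ Y ∈ s, {k | dist (x k) Y < t Y}) 0 := by
    intro s
    induction s using Finset.induction with
    | empty => simpa using lamDensity_zero_empty l
    | insert _ _ hni ih =>
      rw [Finset.set_biUnion_insert]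
      exact lamDensity_zero_union hl (hdt _) ih
  have huniv : lamDensity l Set.univ 0 := by
    apply lamDensity_zero_mono hl ?_ (lamDensity_zero_union hl hdens (hUnion s))
    intro k _
    by_cases hk : x k ∈ C
    · right
      have := hcov hk
      simp only [Set.mem_iUnion, Metric.mem_ball] at this
      obtain ⟨Y, hYs, hYd⟩ := this
      simp only [Set.mem_iUnion, Set.mem_setOf_eq]
      exact ⟨Y, hYs, hYd⟩
    · left
      exact hk
  exact not_lamDensity_univ_zero hl huniv
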